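/- Let μ' be a 1-envy-free matching in market (N, M, u) and let T*(μ') be the stable matching obtained by finitely iterating the re-stabilization operator T starting from μ'. Then there is no stable matching μ'' with μ'' ≠ T*(μ') satisfying T*(μ') ≿ μ'' ≿ μ'. In other words, T*(μ') is the college-worst stable matching weakly preferred by all colleges to μ'. -/

import Mathlib

attribute [local instance] Classical.propDecidable

noncomputable section

/-- A many-to-one college admissions market (college admissions model) with `n`
students and `m` colleges.  Strict preferences are encoded by injective rank
functions (a smaller rank means more preferred); `none` is the outside option
`0` (being unmatched / an unfilled position). -/
structure Market (n m : ℕ) where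
  quota : Fin m → ℕ
  sRank : Fin n → Option (Fin m) → ℕ
  sRank_inj : ∀ i, Function.Injective (sRank i)
  cRank : Fin m → Option (Fin n) → ℕ
  cRank_inj : ∀ j, Function.Injective (cRank j)

namespace Market

variable {n m : ℕ}

/-- Student `i` strictly prefers `a` to `b`. -/
def sPref (M : Market n m) (i : Fin n) (a b : Option (Fin m)) : Prop :=
  M.sRank i a < M.sRank i b

/-- College `j` strictly prefers `a` to `b`. -/
def cPref (M : Market n m) (j : Fin m) (a b : Option (Fin n)) : Prop :=
  M.cRank j a < M.cRank j b

/-- The set `μ⁻¹(j)` of students matched to college `j` under `μ`. -/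
def assigned (M : Market n m) (μ : Fin n → Option (Fin m)) (j : Fin m) : Finset (Fin n) :=
  Finset.univ.filter fun i => μ i = some j

/-- `μ` is a (capacity-feasible) matching: `|μ⁻¹(j)| ≤ q_j` for every college. -/
def IsMatching (M : Market n m) (μ : Fin n → Option (Fin m)) : Prop :=
  ∀ j, (M.assigned μ j).card ≤ M.quota j

/-- Individual rationality of `μ`. -/
def IndRational (M : Market n m) (μ : Fin n → Option (Fin m)) : Prop :=
  (∀ i, ¬ M.sPref i none (μ i)) ∧
  (∀ j i', μ i' = some j → ¬ M.cPref j none (some i'))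

/-- `(i, j)` is a blocking pair for `μ`. -/
def Blocks (M : Market n m) (μ : Fin n → Option (Fin m)) (i : Fin n) (j : Fin m) : Prop :=
  M.sPref i (some j) (μ i) ∧
  (((M.assigned μ j).card < M.quota j ∧ M.cPref j (some i) none) ∨
   ((M.assigned μ j).card = M.quota j ∧ ∃ i' ∈ M.assigned μ j, M.cPref j (some i) (some i')))

/-- `μ` is stable: individually rational with no blocking pair. -/
def Stable (M : Market n m) (μ : Fin n → Option (Fin m)) : Prop :=
  M.IndRational μ ∧ ∀ i j, ¬ M.Blocks μ i j

/-- `μ` is envy-free: individually rational and any blocking pair involves an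
unmatched student. -/
def EnvyFree (M : Market n m) (μ : Fin n → Option (Fin m)) : Prop :=
  M.IndRational μ ∧ ∀ i j, M.Blocks μ i j → μ i = none

/-- `μ` is 1-envy-free: envy-free, and either stable or there is one and only
one student who belongs to every blocking pair. -/
def OneEnvyFree (M : Market n m) (μ : Fin n → Option (Fin m)) : Prop :=
  M.EnvyFree μ ∧ (M.Stable μ ∨ ∃! i : Fin n, ∀ i' j, M.Blocks μ i' j → i' = i)

/-- `(i, j)` is a student-maximal blocking pair: `j` is `i`'s most preferred
college among those with whom `i` forms a blocking pair. -/
def StudentMaxBlock (M : Market n m) (μ : Fin n → Option (Fin m)) (i : Fin n) (j : Fin m) :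
    Prop :=
  M.Blocks μ i j ∧ ∀ j', M.Blocks μ i j' → M.sRank i (some j) ≤ M.sRank i (some j')

/-- `T` is the re-stabilization operator: on a 1-envy-free matching with no
blocking pair it is the identity; otherwise it satisfies the unique
student-maximal blocking pair `(i, j)`, matching `i` to `j`, keeping everyone
not matched to `j` unchanged, keeping the students of `j` if `j` has a vacancy
or if they are not `j`'s worst current student, and unmatching `j`'s worst
current student otherwise. -/
def IsTStep (M : Market n m) (T : (Fin n → Option (Fin m)) → Fin n → Option (Fin m)) : Prop :=
  ∀ μ, M.IsMatching μ → M.OneEnvyFree μ →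
    ((∀ i j, ¬ M.Blocks μ i j) → T μ = μ) ∧
    ∀ i j, M.StudentMaxBlock μ i j →
      T μ i = some j ∧
      ∀ i', i' ≠ i →
        (μ i' ≠ some j → T μ i' = μ i') ∧
        (μ i' = some j →
          ((M.assigned μ j).card < M.quota j → T μ i' = μ i') ∧
          ((M.assigned μ j).card = M.quota j →
            ((∃ i'' ∈ M.assigned μ j, M.cPref j (some i') (some i'')) → T μ i' = μ i') ∧
            ((∀ i'' ∈ M.assigned μ j, i'' ≠ i' → M.cPref j (some i'') (some i')) →
              T μ i' = none)))

/-- `Tstar` iterates `T` finitely many times from any 1-envy-free matching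
until a fixed point of `T` is reached. -/
def IsTStarOf (M : Market n m) (T Tstar : (Fin n → Option (Fin m)) → Fin n → Option (Fin m)) :
    Prop :=
  ∀ μ, M.IsMatching μ → M.OneEnvyFree μ →
    ∃ r : ℕ, Tstar μ = T^[r] μ ∧ T (Tstar μ) = Tstar μ

/-- A one-step responsive improvement for college `j`: `A` is obtained from `B`
either by filling a vacancy with an acceptable student, or by swapping a
student of `B` for a strictly preferred outside student. -/
def SwapImproves (M : Market n m) (j : Fin m) (A B : Finset (Fin n)) : Prop :=
  (∃ i₁, i₁ ∉ B ∧ A = insert i₁ B ∧ M.cPref j (some i₁) none) ∨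
  (∃ i₁ i₂, i₂ ∈ B ∧ i₁ ∉ B ∧ A = insert i₁ (B.erase i₂) ∧ M.cPref j (some i₁) (some i₂))

/-- The responsive extension of college `j`'s strict preference to sets of
students: the transitive closure of one-step responsive improvements. -/
def SetPref (M : Market n m) (j : Fin m) (A B : Finset (Fin n)) : Prop :=
  Relation.TransGen (M.SwapImproves j) A B

/-- `μ₁ ≿ μ₂`: every college either gets the same set of students or a
strictly (responsively) preferred set. -/
def CollegesWeakPref (M : Market n m) (μ₁ μ₂ : Fin n → Option (Fin m)) : Prop :=
  ∀ j, M.assigned μ₁ j = M.assigned μ₂ j ∨ M.SetPref j (M.assigned μ₁ j) (M.assigned μ₂ j)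

/-- `μ` is the student-optimal stable matching: a stable matching that every
student weakly prefers to any other stable matching. -/
def IsSOSM (M : Market n m) (μ : Fin n → Option (Fin m)) : Prop :=
  M.IsMatching μ ∧ M.Stable μ ∧
    ∀ μ', M.IsMatching μ' → M.Stable μ' → ∀ i, M.sRank i (μ i) ≤ M.sRank i (μ' i)

/-- `μ` (with student `i` unmatched) is a stable matching of the market in
which student `i` has been removed. -/
def StableAway (M : Market n m) (i : Fin n) (μ : Fin n → Option (Fin m)) : Prop :=
  μ i = none ∧
  (∀ i', i' ≠ i → ¬ M.sPref i' none (μ i')) ∧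
  (∀ j i', i' ≠ i → μ i' = some j → ¬ M.cPref j none (some i')) ∧
  (∀ i' j, i' ≠ i → ¬ M.Blocks μ i' j)

/-- `μ` (with student `i` unmatched) is the student-optimal stable matching of
the market in which student `i` has been removed. -/
def IsSOSMAway (M : Market n m) (i : Fin n) (μ : Fin n → Option (Fin m)) : Prop :=
  M.IsMatching μ ∧ M.StableAway i μ ∧
    ∀ μ', M.IsMatching μ' → M.StableAway i μ' →
      ∀ i', i' ≠ i → M.sRank i' (μ i') ≤ M.sRank i' (μ' i')

/-- The maximum rank difference `h(w)` among the colleges' preferences: the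
largest rank gap `|w_j(i₁) − w_j(i₂)|` over colleges `j` and pairs `(i₁, i₂)`
on whose relative ranking at least two colleges disagree (`0` if there is no
disagreement). -/
def maxRankDiff (M : Market n m) : ℕ :=
  Finset.univ.sup fun j : Fin m =>
    (Finset.univ.filter fun q : Option (Fin n) × Option (Fin n) =>
        ∃ j₁ j₂ : Fin m, M.cPref j₁ q.1 q.2 ∧ M.cPref j₂ q.2 q.1).sup
      fun q => ((M.cRank j q.1 : ℤ) - (M.cRank j q.2 : ℤ)).natAbs

/-- `N*_{j,1}(μ) = μ⁻¹(j) \ μ*⁻¹(j)` : students of `j` under `μ` but not `μs`. -/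
def Nset1 (M : Market n m) (μ μs : Fin n → Option (Fin m)) (j : Fin m) : Finset (Fin n) :=
  M.assigned μ j \ M.assigned μs j

/-- `N*_{j,0}(μ) = μ*⁻¹(j) \ μ⁻¹(j)` : students of `j` under `μs` but not `μ`. -/
def Nset0 (M : Market n m) (μ μs : Fin n → Option (Fin m)) (j : Fin m) : Finset (Fin n) :=
  M.assigned μs j \ M.assigned μ j

/-- The rank `r_{j,i}(A)` of student `i` within the set `A` according to `≻_j`. -/
def rankIn (M : Market n m) (j : Fin m) (i : Fin n) (A : Finset (Fin n)) : ℕ :=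
  (A.filter fun i' => M.cPref j (some i') (some i)).card + 1

/-- `a ▷_j b`: student `a` displaces student `b` from college `j` (as we move
from the SOSM `μs` to the stable matching `μ`). -/
def Displaces (M : Market n m) (μ μs : Fin n → Option (Fin m)) (j : Fin m) (a b : Fin n) :
    Prop :=
  a ∈ M.Nset1 μ μs j ∧ b ∈ M.Nset0 μ μs j ∧
    M.rankIn j a (M.Nset1 μ μs j) = M.rankIn j b (M.Nset0 μ μs j)

/-- `a ▷ b`: `a` displaces `b` from some college. -/
def DisplacesAny (M : Market n m) (μ μs : Fin n → Option (Fin m)) (a b : Fin n) : Prop :=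
  ∃ j, M.Displaces μ μs j a b

/-- The positions of the related one-to-one market: college `j` is split into
`q_j` ordered positions. -/
abbrev Position (M : Market n m) : Type := (j : Fin m) × Fin (M.quota j)

/-- Student `i`'s strict preference over positions in the related one-to-one
market: positions of strictly better colleges are better, and within a college
a smaller index is better. -/
def PosBetter (M : Market n m) (i : Fin n) :
    Option (Position M) → Option (Position M) → Prop
  | some q, some q' =>
      M.sRank i (some q.1) < M.sRank i (some q'.1) ∨ (q.1 = q'.1 ∧ (q.2 : ℕ) < (q'.2 : ℕ))
  | some q, none => M.sRank i (some q.1) < M.sRank i none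
  | none, some q' => M.sRank i none < M.sRank i (some q'.1)
  | none, none => False

/-- `(μN, μM)` is the one-to-one matching of the related market corresponding
to the many-to-one matching `μ`: the students of `μ⁻¹(j)` occupy, in the order
of college `j`'s preference, the ordered positions of `j`. -/
def Corresponds (M : Market n m) (μ : Fin n → Option (Fin m))
    (μN : Fin n → Option (Position M)) (μM : Position M → Option (Fin n)) : Prop :=
  (∀ i p, μN i = some p ↔ μM p = some i) ∧
  (∀ i j, (∃ s, μN i = some ⟨j, s⟩) ↔ μ i = some j) ∧
  (∀ i j (s : Fin (M.quota j)), μN i = some ⟨j, s⟩ →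
    (s : ℕ) = ((M.assigned μ j).filter fun i' => M.cPref j (some i') (some i)).card)

/-- `(i, p)` is a blocking pair in the related one-to-one market. -/
def PosBlocks (M : Market n m) (μN : Fin n → Option (Position M))
    (μM : Position M → Option (Fin n)) (i : Fin n) (p : Position M) : Prop :=
  M.PosBetter i (some p) (μN i) ∧ M.cPref p.1 (some i) (μM p)

/-- Individual rationality in the related one-to-one market. -/
def PosIR (M : Market n m) (μN : Fin n → Option (Position M))
    (μM : Position M → Option (Fin n)) : Prop :=
  (∀ i, ¬ M.PosBetter i none (μN i)) ∧ (∀ p : Position M, ¬ M.cPref p.1 none (μM p))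

/-- Stability in the related one-to-one market. -/
def PosStable (M : Market n m) (μN : Fin n → Option (Position M))
    (μM : Position M → Option (Fin n)) : Prop :=
  M.PosIR μN μM ∧ ∀ i p, ¬ M.PosBlocks μN μM i p

/-- Simplicity in the related one-to-one market: individually rational and any
blocking pair involves an unmatched student. -/
def PosSimple (M : Market n m) (μN : Fin n → Option (Position M))
    (μM : Position M → Option (Fin n)) : Prop :=
  M.PosIR μN μM ∧ ∀ i p, M.PosBlocks μN μM i p → μN i = none

/-- 1-simplicity in the related one-to-one market: simple, and either stable or
there is one and only one student belonging to every blocking pair. -/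
def PosOneSimple (M : Market n m) (μN : Fin n → Option (Position M))
    (μM : Position M → Option (Fin n)) : Prop :=
  M.PosSimple μN μM ∧
    (M.PosStable μN μM ∨ ∃! i : Fin n, ∀ i' p, M.PosBlocks μN μM i' p → i' = i)

end Market

/-- A generic one-to-one matching market with `n` students and `p` positions,
with strict preferences encoded by injective rank functions. -/
structure OOMarket (n p : ℕ) where
  sRank : Fin n → Option (Fin p) → ℕ
  sRank_inj : ∀ i, Function.Injective (sRank i)
  pRank : Fin p → Option (Fin n) → ℕ
  pRank_inj : ∀ c, Function.Injective (pRank c)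

namespace OOMarket

variable {n p : ℕ}

/-- `(μN, μM)` is a one-to-one matching. -/
def IsOOMatching (O : OOMarket n p) (μN : Fin n → Option (Fin p))
    (μM : Fin p → Option (Fin n)) : Prop :=
  ∀ i c, μN i = some c ↔ μM c = some i

/-- `(i, c)` is a blocking pair for `(μN, μM)`. -/
def OOBlocks (O : OOMarket n p) (μN : Fin n → Option (Fin p))
    (μM : Fin p → Option (Fin n)) (i : Fin n) (c : Fin p) : Prop :=
  O.sRank i (some c) < O.sRank i (μN i) ∧ O.pRank c (some i) < O.pRank c (μM c)

/-- Individual rationality. -/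
def OOIR (O : OOMarket n p) (μN : Fin n → Option (Fin p))
    (μM : Fin p → Option (Fin n)) : Prop :=
  (∀ i, ¬ O.sRank i none < O.sRank i (μN i)) ∧ (∀ c, ¬ O.pRank c none < O.pRank c (μM c))

/-- Stability. -/
def OOStable (O : OOMarket n p) (μN : Fin n → Option (Fin p))
    (μM : Fin p → Option (Fin n)) : Prop :=
  O.OOIR μN μM ∧ ∀ i c, ¬ O.OOBlocks μN μM i c

/-- Simplicity: individually rational and every blocking pair involves an
unmatched student. -/
def OOSimple (O : OOMarket n p) (μN : Fin n → Option (Fin p))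
    (μM : Fin p → Option (Fin n)) : Prop :=
  O.OOIR μN μM ∧ ∀ i c, O.OOBlocks μN μM i c → μN i = none

/-- 1-simplicity: simple, and either stable or there is one and only one
student belonging to every blocking pair. -/
def OOOneSimple (O : OOMarket n p) (μN : Fin n → Option (Fin p))
    (μM : Fin p → Option (Fin n)) : Prop :=
  O.OOSimple μN μM ∧
    (O.OOStable μN μM ∨ ∃! i : Fin n, ∀ i' c, O.OOBlocks μN μM i' c → i' = i)

end OOMarket

end

section Auxiliary

open Finset

namespace Market

variable {n m : ℕ}

/-- Count of students in `S` whose rank at college `c` is below `r`. -/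
def cnt (M : Market n m) (c : Fin m) (S : Finset (Fin n)) (r : ℕ) : ℕ :=
  (S.filter fun x => M.cRank c (some x) < r).card

lemma mem_assigned {M : Market n m} {μ : Fin n → Option (Fin m)} {c : Fin m} {x : Fin n} :
    x ∈ M.assigned μ c ↔ μ x = some c := by
  simp [Market.assigned]

lemma cnt_mono_subset {M : Market n m} {c : Fin m} {S S' : Finset (Fin n)} (h : S ⊆ S') (r : ℕ) :
    M.cnt c S r ≤ M.cnt c S' r :=
  Finset.card_le_card (Finset.filter_subset_filter _ h)

lemma cnt_le_card {M : Market n m} {c : Fin m} (S : Finset (Fin n)) (r : ℕ) :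
    M.cnt c S r ≤ S.card :=
  Finset.card_le_card (Finset.filter_subset _ _)

lemma swap_cnt {M : Market n m} {c : Fin m} {A B : Finset (Fin n)}
    (h : M.SwapImproves c A B) (r : ℕ) : M.cnt c B r ≤ M.cnt c A r := by
  rcases h with ⟨i₁, hi₁, rfl, -⟩ | ⟨i₁, i₂, hi₂B, hi₁B, rfl, hlt⟩
  · exact cnt_mono_subset (Finset.subset_insert _ _) r
  · by_cases hr : M.cRank c (some i₂) < r
    · have hr1 : M.cRank c (some i₁) < r := lt_trans hlt hr
      have h1 : (B.filter fun x => M.cRank c (some x) < r) ⊆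
          insert i₂ ((B.erase i₂).filter fun x => M.cRank c (some x) < r) := by
        intro y hy
        obtain ⟨hyB, hyr⟩ := Finset.mem_filter.mp hy
        by_cases hyi : y = i₂
        · exact Finset.mem_insert.mpr (Or.inl hyi)
        · exact Finset.mem_insert.mpr (Or.inr (Finset.mem_filter.mpr
            ⟨Finset.mem_erase.mpr ⟨hyi, hyB⟩, hyr⟩))
      have h2 : ((insert i₁ (B.erase i₂)).filter fun x => M.cRank c (some x) < r) =
          insert i₁ ((B.erase i₂).filter fun x => M.cRank c (some x) < r) := by
        rw [Finset.filter_insert, if_pos hr1]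
      calc M.cnt c B r ≤ (insert i₂ ((B.erase i₂).filter fun x => M.cRank c (some x) < r)).card :=
            Finset.card_le_card h1
        _ ≤ ((B.erase i₂).filter fun x => M.cRank c (some x) < r).card + 1 :=
            Finset.card_insert_le _ _
        _ = (insert i₁ ((B.erase i₂).filter fun x => M.cRank c (some x) < r)).card := by
            rw [Finset.card_insert_of_notMem (fun hmem =>
              hi₁B (Finset.mem_of_mem_erase (Finset.mem_filter.mp hmem).1))]
        _ = M.cnt c (insert i₁ (B.erase i₂)) r := by rw [Market.cnt, h2]
    · have h1 : (B.filter fun x => M.cRank c (some x) < r) ⊆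
          ((insert i₁ (B.erase i₂)).filter fun x => M.cRank c (some x) < r) := by
        intro y hy
        obtain ⟨hyB, hyr⟩ := Finset.mem_filter.mp hy
        have hyi : y ≠ i₂ := fun e => hr (e ▸ hyr)
        exact Finset.mem_filter.mpr
          ⟨Finset.mem_insert.mpr (Or.inr (Finset.mem_erase.mpr ⟨hyi, hyB⟩)), hyr⟩
      exact Finset.card_le_card h1

lemma setPref_cnt {M : Market n m} {c : Fin m} {A B : Finset (Fin n)}
    (h : M.SetPref c A B) (r : ℕ) : M.cnt c B r ≤ M.cnt c A r := by
  induction h with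
  | single hs => exact swap_cnt hs r
  | tail _ hs ih => exact le_trans (swap_cnt hs r) ih

lemma weakPref_cnt {M : Market n m} {μ₁ μ₂ : Fin n → Option (Fin m)}
    (h : M.CollegesWeakPref μ₁ μ₂) (c : Fin m) (r : ℕ) :
    M.cnt c (M.assigned μ₂ c) r ≤ M.cnt c (M.assigned μ₁ c) r := by
  rcases h c with he | hp
  · rw [he]
  · exact setPref_cnt hp r

lemma eq_of_cnt_eq {M : Market n m} {c : Fin m} {A B : Finset (Fin n)}
    (h : ∀ r, M.cnt c A r = M.cnt c B r) : A = B := by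
  ext x
  have key : ∀ S : Finset (Fin n),
      M.cnt c S (M.cRank c (some x) + 1) =
        M.cnt c S (M.cRank c (some x)) + (if x ∈ S then 1 else 0) := by
    intro S
    have hset : (S.filter fun y => M.cRank c (some y) < M.cRank c (some x) + 1) =
        (S.filter fun y => M.cRank c (some y) < M.cRank c (some x)) ∪
          (S.filter fun y => y = x) := by
      ext y
      simp only [Finset.mem_filter, Finset.mem_union, Nat.lt_succ_iff]
      constructor
      · rintro ⟨hyS, hle⟩
        rcases lt_or_eq_of_le hle with h' | h'
        · exact Or.inl ⟨hyS, h'⟩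
        · exact Or.inr ⟨hyS, Option.some.inj (M.cRank_inj c h')⟩
      · rintro (⟨hyS, hlt⟩ | ⟨hyS, rfl⟩)
        · exact ⟨hyS, le_of_lt hlt⟩
        · exact ⟨hyS, le_refl _⟩
    have hdis : Disjoint (S.filter fun y => M.cRank c (some y) < M.cRank c (some x))
        (S.filter fun y => y = x) := by
      rw [Finset.disjoint_left]
      intro y h1 h2
      have e := (Finset.mem_filter.mp h2).2
      have := (Finset.mem_filter.mp h1).2
      rw [e] at this
      exact lt_irrefl _ this
    rw [Market.cnt, Market.cnt, hset, Finset.card_union_of_disjoint hdis]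
    congr 1
    by_cases hx : x ∈ S
    · rw [if_pos hx, Finset.filter_eq', if_pos hx, Finset.card_singleton]
    · rw [if_neg hx, Finset.filter_eq', if_neg hx, Finset.card_empty]
  have h1 := h (M.cRank c (some x) + 1)
  have h2 := h (M.cRank c (some x))
  rw [key A, key B, h2] at h1
  by_cases hA : x ∈ A <;> by_cases hB : x ∈ B <;>
    simp [hA, hB] at h1 ⊢

lemma count_clash {M : Market n m} {μ μ'' : Fin n → Option (Fin m)}
    (hM'' : M.IsMatching μ'')
    (hdom : ∀ c r, M.cnt c (M.assigned μ c) r ≤ M.cnt c (M.assigned μ'' c) r)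
    {x : Fin n} {c : Fin m} (hq : (M.assigned μ c).card = M.quota c)
    (hall : ∀ y ∈ M.assigned μ c, M.cPref c (some y) (some x))
    (hx'' : μ'' x = some c) : False := by
  set r := M.cRank c (some x) with hr
  have h1 : M.cnt c (M.assigned μ c) r = M.quota c := by
    have he : ((M.assigned μ c).filter fun y => M.cRank c (some y) < r) = M.assigned μ c :=
      Finset.filter_true_of_mem (fun y hy => hall y hy)
    rw [Market.cnt, he, hq]
  have hx2 : x ∈ M.assigned μ'' c := mem_assigned.mpr hx''
  have h2 : M.cnt c (M.assigned μ'' c) r ≤ M.quota c - 1 := by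
    have hsub : ((M.assigned μ'' c).filter fun y => M.cRank c (some y) < r) ⊆
        (M.assigned μ'' c).erase x := by
      intro y hy
      obtain ⟨hy1, hy2⟩ := Finset.mem_filter.mp hy
      refine Finset.mem_erase.mpr ⟨fun e => ?_, hy1⟩
      rw [e] at hy2
      exact lt_irrefl _ hy2
    calc M.cnt c (M.assigned μ'' c) r ≤ ((M.assigned μ'' c).erase x).card :=
          Finset.card_le_card hsub
      _ = (M.assigned μ'' c).card - 1 := Finset.card_erase_of_mem hx2
      _ ≤ M.quota c - 1 := Nat.sub_le_sub_right (hM'' c) 1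
  have h3 := hdom c r
  have h4 : 1 ≤ M.quota c :=
    le_trans (Finset.card_pos.mpr ⟨x, hx2⟩) (hM'' c)
  omega

lemma blocked_shape {M : Market n m} {μ : Fin n → Option (Fin m)} (hM : M.IsMatching μ)
    {x : Fin n} {c : Fin m} (hnb : ¬ M.Blocks μ x c) (hpref : M.sPref x (some c) (μ x))
    (hacc : M.cPref c (some x) none) (hxnot : μ x ≠ some c) :
    (M.assigned μ c).card = M.quota c ∧ ∀ y ∈ M.assigned μ c, M.cPref c (some y) (some x) := by
  have h1 : ¬ (M.assigned μ c).card < M.quota c := fun h => hnb ⟨hpref, Or.inl ⟨h, hacc⟩⟩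
  have hq : (M.assigned μ c).card = M.quota c := le_antisymm (hM c) (not_lt.mp h1)
  refine ⟨hq, fun y hy => ?_⟩
  by_contra h
  have hxy : x ≠ y := fun e => hxnot (e ▸ mem_assigned.mp hy)
  have hlt : M.cPref c (some x) (some y) :=
    lt_of_le_of_ne (not_lt.mp h) (fun e => hxy (Option.some.inj (M.cRank_inj c e)))
  exact hnb ⟨hpref, Or.inr ⟨hq, y, hy, hlt⟩⟩

lemma still_wants {M : Market n m} {μ μ'' : Fin n → Option (Fin m)} (hM : M.IsMatching μ)
    (hIRs : ∀ i, ¬ M.sPref i none (μ i)) (hunm : ∀ i j, M.Blocks μ i j → μ i = none)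
    (hM'' : M.IsMatching μ'') (hst'' : M.Stable μ'')
    (hdom : ∀ c r, M.cnt c (M.assigned μ c) r ≤ M.cnt c (M.assigned μ'' c) r)
    {x : Fin n} {j : Fin m} (hx : μ x = some j) (hx'' : μ'' x ≠ some j) :
    M.sPref x (some j) (μ'' x) := by
  by_contra h
  have hlt : M.sRank x (μ'' x) < M.sRank x (some j) :=
    lt_of_le_of_ne (not_lt.mp h) (fun e => hx'' (M.sRank_inj x e))
  cases hc : μ'' x with
  | none =>
    rw [hc] at hlt
    have h2 := hIRs x
    rw [hx] at h2
    exact h2 hlt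
  | some c =>
    rw [hc] at hlt
    have hcj : c ≠ j := fun e => hx'' (by rw [hc, e])
    have hpref : M.sPref x (some c) (μ x) := by rw [hx]; exact hlt
    have hnb : ¬ M.Blocks μ x c := fun hb => by
      rw [hunm x c hb] at hx; cases hx
    have haccc : M.cPref c (some x) none := by
      have h2 := hst''.1.2 c x hc
      exact lt_of_le_of_ne (not_lt.mp h2) (fun e => nomatch (M.cRank_inj c e))
    have hxnot : μ x ≠ some c := by
      rw [hx]; exact fun e => hcj (Option.some.inj e).symm
    obtain ⟨hq, hall⟩ := blocked_shape hM hnb hpref haccc hxnot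
    exact count_clash hM'' hdom hq hall hc

end Market

end Auxiliary

section KeyLemma

open Finset

namespace Market

variable {n m : ℕ}

lemma key {M : Market n m} {T : (Fin n → Option (Fin m)) → Fin n → Option (Fin m)}
    (hT : M.IsTStep T) {μ : Fin n → Option (Fin m)} (hM : M.IsMatching μ)
    (hEF : M.OneEnvyFree μ) {i0 : Fin n} {j0 : Fin m} (hblk0 : M.Blocks μ i0 j0) :
    M.IsMatching (T μ) ∧ M.OneEnvyFree (T μ) ∧
      ∀ μ'' : Fin n → Option (Fin m), M.IsMatching μ'' → M.Stable μ'' →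
        (∀ c r, M.cnt c (M.assigned μ c) r ≤ M.cnt c (M.assigned μ'' c) r) →
        ∀ c r, M.cnt c (M.assigned (T μ) c) r ≤ M.cnt c (M.assigned μ'' c) r := by
  obtain ⟨⟨⟨hIRs, hIRc⟩, hunm⟩, hone⟩ := hEF
  have hone' : ∃! i : Fin n, ∀ i' j', M.Blocks μ i' j' → i' = i := by
    rcases hone with hst | h
    · exact absurd hblk0 (hst.2 i0 j0)
    · exact h
  obtain ⟨i, hPi, -⟩ := hone'
  have hbi0 : M.Blocks μ i j0 := by
    have e := hPi i0 j0 hblk0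
    rwa [e] at hblk0
  have hBne : (Finset.univ.filter fun j' => M.Blocks μ i j').Nonempty :=
    ⟨j0, Finset.mem_filter.mpr ⟨Finset.mem_univ _, hbi0⟩⟩
  obtain ⟨j, hjmem, hjmin⟩ :=
    Finset.exists_min_image _ (fun j' => M.sRank i (some j')) hBne
  have hbj : M.Blocks μ i j := (Finset.mem_filter.mp hjmem).2
  have hSMB : M.StudentMaxBlock μ i j :=
    ⟨hbj, fun j' hb => hjmin j' (Finset.mem_filter.mpr ⟨Finset.mem_univ _, hb⟩)⟩
  have spec := (hT μ hM ⟨⟨⟨hIRs, hIRc⟩, hunm⟩, hone⟩).2 i j hSMB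
  have hνi : T μ i = some j := spec.1
  have hiu : μ i = none := hunm i j hbj
  have hij : M.sRank i (some j) < M.sRank i none := by
    have h := hbj.1
    rwa [hiu] at h
  have hiS : i ∉ M.assigned μ j := by
    rw [mem_assigned, hiu]
    exact fun h => nomatch h
  have hacc : M.cRank j (some i) < M.cRank j none := by
    rcases hbj.2 with ⟨-, h⟩ | ⟨-, x, hx, hxlt⟩
    · exact h
    · have hxn : M.cRank j (some x) < M.cRank j none :=
        lt_of_le_of_ne (not_lt.mp (hIRc j x (mem_assigned.mp hx)))
          (fun e => nomatch (M.cRank_inj j e))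
      exact lt_trans hxlt hxn
  -- Structure bundle: the new matching at j is `insert i S'` with `S' ⊆ old`,
  -- other colleges unchanged, and T μ is a 1-envy-free matching.
  have H : ∃ S' : Finset (Fin n), S' ⊆ M.assigned μ j ∧
      M.assigned (T μ) j = insert i S' ∧
      (∀ c, c ≠ j → M.assigned (T μ) c = M.assigned μ c) ∧
      M.IsMatching (T μ) ∧ M.OneEnvyFree (T μ) := by
    rcases hbj.2 with ⟨hlt, -⟩ | ⟨hq, x0, hx0S, hx0lt⟩
    · -- VACANCY case
      have hνrest : ∀ i', i' ≠ i → T μ i' = μ i' := by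
        intro i' h
        by_cases hc : μ i' = some j
        · exact ((spec.2 i' h).2 hc).1 hlt
        · exact (spec.2 i' h).1 hc
      have hAj : M.assigned (T μ) j = insert i (M.assigned μ j) := by
        ext y
        rw [mem_assigned, Finset.mem_insert, mem_assigned]
        constructor
        · intro hy
          by_cases hyi : y = i
          · exact Or.inl hyi
          · exact Or.inr (by rw [← hνrest y hyi]; exact hy)
        · rintro (rfl | hy)
          · exact hνi
          · have hyi : y ≠ i := fun e => by rw [e, hiu] at hy; cases hy
            rw [hνrest y hyi]; exact hy
      have hAc : ∀ c, c ≠ j → M.assigned (T μ) c = M.assigned μ c := by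
        intro c hc
        ext y
        rw [mem_assigned, mem_assigned]
        by_cases hyi : y = i
        · subst hyi
          rw [hνi, hiu]
          constructor
          · intro h; exact absurd (Option.some.inj h).symm hc
          · intro h; cases h
        · rw [hνrest y hyi]
      have hMν : M.IsMatching (T μ) := by
        intro c
        by_cases hc : c = j
        · subst hc
          rw [hAj, Finset.card_insert_of_notMem hiS]
          exact hlt
        · rw [hAc c hc]; exact hM c
      have hnoblk : ∀ i' c, ¬ M.Blocks (T μ) i' c := by
        intro i' c hb
        by_cases hyi : i' = i
        · subst hyi
          have h1 : M.sRank i' (some c) < M.sRank i' (some j) := by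
            have h := hb.1; rwa [hνi] at h
          have hcj : c ≠ j := fun e => by rw [e] at h1; exact lt_irrefl _ h1
          have h2 := hb.2
          rw [hAc c hcj] at h2
          have hblkμ : M.Blocks μ i' c := by
            refine ⟨?_, h2⟩
            rw [hiu]
            exact lt_trans h1 hij
          exact absurd h1 (not_lt.mpr (hSMB.2 c hblkμ))
        · have hν' : T μ i' = μ i' := hνrest i' hyi
          by_cases hcj : c = j
          · subst hcj
            have hs : M.sPref i' (some c) (μ i') := by
              have h := hb.1; rwa [hν'] at h
            have haccx : M.cPref c (some i') none := by
              rcases hb.2 with ⟨-, h⟩ | ⟨-, x, hxmem, hxlt⟩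
              · exact h
              · rw [hAj] at hxmem
                rcases Finset.mem_insert.mp hxmem with rfl | hxS
                · exact lt_trans hxlt hacc
                · refine lt_trans hxlt (lt_of_le_of_ne
                    (not_lt.mp (hIRc c x (mem_assigned.mp hxS)))
                    (fun e => nomatch (M.cRank_inj c e)))
            exact hyi (hPi i' c ⟨hs, Or.inl ⟨hlt, haccx⟩⟩)
          · have h2 := hb.2
            rw [hAc c hcj] at h2
            have hblkμ : M.Blocks μ i' c := ⟨by rw [← hν']; exact hb.1, h2⟩
            exact hyi (hPi i' c hblkμ)
      have hIRν : M.IndRational (T μ) := by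
        constructor
        · intro i'
          by_cases hyi : i' = i
          · subst hyi
            rw [hνi]
            exact not_lt.mpr (le_of_lt hij)
          · rw [hνrest i' hyi]; exact hIRs i'
        · intro c i' h
          by_cases hyi : i' = i
          · subst hyi
            rw [hνi] at h
            have := Option.some.inj h
            subst this
            exact lt_asymm hacc
          · rw [hνrest i' hyi] at h
            exact hIRc c i' h
      exact ⟨M.assigned μ j, le_refl _, hAj, hAc, hMν,
        ⟨⟨hIRν, fun i' c hb => absurd hb (hnoblk i' c)⟩, Or.inl ⟨hIRν, hnoblk⟩⟩⟩
    · -- FULL case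
      obtain ⟨i₂, hi₂S, hi₂max⟩ :=
        Finset.exists_max_image (M.assigned μ j) (fun x => M.cRank j (some x)) ⟨x0, hx0S⟩
      have hi₂j : μ i₂ = some j := mem_assigned.mp hi₂S
      have hi₂i : i₂ ≠ i := fun e => by rw [e, hiu] at hi₂j; cases hi₂j
      have hii₂rank : M.cRank j (some i) < M.cRank j (some i₂) :=
        lt_of_lt_of_le hx0lt (hi₂max x0 hx0S)
      have hstrict : ∀ x ∈ M.assigned μ j, x ≠ i₂ → M.cPref j (some x) (some i₂) :=
        fun x hx hne => lt_of_le_of_ne (hi₂max x hx)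
          (fun e => hne (Option.some.inj (M.cRank_inj j e)))
      have hνi₂ : T μ i₂ = none :=
        ((((spec.2 i₂ hi₂i).2 hi₂j).2 hq).2) (fun x hx hne => hstrict x hx hne)
      have hνkeep : ∀ i', i' ≠ i → i' ≠ i₂ → T μ i' = μ i' := by
        intro i' h1 h2
        by_cases hc : μ i' = some j
        · exact ((((spec.2 i' h1).2 hc).2 hq).1)
            ⟨i₂, hi₂S, hstrict i' (mem_assigned.mpr hc) h2⟩
        · exact (spec.2 i' h1).1 hc
      have hAj : M.assigned (T μ) j = insert i ((M.assigned μ j).erase i₂) := by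
        ext y
        rw [mem_assigned, Finset.mem_insert, Finset.mem_erase, mem_assigned]
        by_cases h1 : y = i
        · subst h1
          simp [hνi]
        · by_cases h2 : y = i₂
          · subst h2
            rw [hνi₂]
            simp [hi₂i]
          · rw [hνkeep y h1 h2]
            simp [h1, h2]
      have hAc : ∀ c, c ≠ j → M.assigned (T μ) c = M.assigned μ c := by
        intro c hc
        ext y
        rw [mem_assigned, mem_assigned]
        by_cases h1 : y = i
        · subst h1
          rw [hνi, hiu]
          constructor
          · intro h; exact absurd (Option.some.inj h).symm hc
          · intro h; cases h
        · by_cases h2 : y = i₂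
          · subst h2
            rw [hνi₂, hi₂j]
            constructor
            · intro h; cases h
            · intro h; exact absurd (Option.some.inj h).symm hc
          · rw [hνkeep y h1 h2]
      have hiE : i ∉ (M.assigned μ j).erase i₂ :=
        fun h => hiS (Finset.mem_of_mem_erase h)
      have hcardν : (M.assigned (T μ) j).card = M.quota j := by
        rw [hAj, Finset.card_insert_of_notMem hiE, Finset.card_erase_of_mem hi₂S]
        have h1 : 1 ≤ (M.assigned μ j).card := Finset.card_pos.mpr ⟨i₂, hi₂S⟩
        omega
      have hMν : M.IsMatching (T μ) := by
        intro c
        by_cases hc : c = j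
        · subst hc; rw [hcardν]
        · rw [hAc c hc]; exact hM c
      have hblkν : ∀ i' c, M.Blocks (T μ) i' c → i' = i₂ := by
        intro i' c hb
        by_cases hyi : i' = i
        · subst hyi
          have h1 : M.sRank i' (some c) < M.sRank i' (some j) := by
            have h := hb.1; rwa [hνi] at h
          have hcj : c ≠ j := fun e => by rw [e] at h1; exact lt_irrefl _ h1
          have h2 := hb.2
          rw [hAc c hcj] at h2
          have hblkμ : M.Blocks μ i' c := ⟨by rw [hiu]; exact lt_trans h1 hij, h2⟩
          exact absurd h1 (not_lt.mpr (hSMB.2 c hblkμ))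
        · by_cases hyi₂ : i' = i₂
          · exact hyi₂
          · exfalso
            have hν' := hνkeep i' hyi hyi₂
            by_cases hcj : c = j
            · subst hcj
              have hs : M.sPref i' (some c) (μ i') := by
                have h := hb.1; rwa [hν'] at h
              rcases hb.2 with ⟨hltν, -⟩ | ⟨-, x, hxmem, hxlt⟩
              · rw [hcardν] at hltν
                exact lt_irrefl _ hltν
              · rw [hAj] at hxmem
                rcases Finset.mem_insert.mp hxmem with rfl | hxE
                · exact hyi (hPi i' c
                    ⟨hs, Or.inr ⟨hq, i₂, hi₂S, lt_trans hxlt hii₂rank⟩⟩)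
                · exact hyi (hPi i' c
                    ⟨hs, Or.inr ⟨hq, x, Finset.mem_of_mem_erase hxE, hxlt⟩⟩)
            · have h2 := hb.2
              rw [hAc c hcj] at h2
              exact hyi (hPi i' c ⟨by rw [← hν']; exact hb.1, h2⟩)
      have hIRν : M.IndRational (T μ) := by
        constructor
        · intro i'
          by_cases hyi : i' = i
          · subst hyi
            rw [hνi]
            exact not_lt.mpr (le_of_lt hij)
          · by_cases hyi₂ : i' = i₂
            · subst hyi₂
              rw [hνi₂]
              exact lt_irrefl _
            · rw [hνkeep i' hyi hyi₂]; exact hIRs i'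
        · intro c i' h
          by_cases hyi : i' = i
          · subst hyi
            rw [hνi] at h
            have := Option.some.inj h
            subst this
            exact lt_asymm hacc
          · by_cases hyi₂ : i' = i₂
            · subst hyi₂
              rw [hνi₂] at h
              cases h
            · rw [hνkeep i' hyi hyi₂] at h
              exact hIRc c i' h
      have hOEF : M.OneEnvyFree (T μ) := by
        refine ⟨⟨hIRν, fun i' c hb => by rw [hblkν i' c hb]; exact hνi₂⟩, ?_⟩
        by_cases hex : ∃ i' c, M.Blocks (T μ) i' c
        · right
          obtain ⟨a, c0, hb0⟩ := hex
          refine ⟨i₂, fun i' c hb => hblkν i' c hb, fun y hy => ?_⟩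
          have e1 : a = y := hy a c0 hb0
          have e2 : a = i₂ := hblkν a c0 hb0
          rw [← e1, e2]
        · left
          exact ⟨hIRν, fun i' c hb => hex ⟨i', c, hb⟩⟩
      exact ⟨(M.assigned μ j).erase i₂, Finset.erase_subset _ _, hAj, hAc, hMν, hOEF⟩
  obtain ⟨S', hsub, hAj, hAc, hMν, hOEF⟩ := H
  refine ⟨hMν, hOEF, ?_⟩
  intro μ'' hM'' hst'' hdom c r
  by_cases hcj : c = j
  swap
  · rw [hAc c hcj]; exact hdom c r
  rw [hcj]
  by_cases hri : M.cRank j (some i) < r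
  · by_cases hi'' : μ'' i = some j
    · by_cases hxall : ∀ x ∈ M.assigned μ j, M.cRank j (some x) < r → x ∈ M.assigned μ'' j
      · apply Finset.card_le_card
        intro y hy
        obtain ⟨hy1, hy2⟩ := Finset.mem_filter.mp hy
        rw [hAj] at hy1
        rcases Finset.mem_insert.mp hy1 with rfl | hyS'
        · exact Finset.mem_filter.mpr ⟨mem_assigned.mpr hi'', hy2⟩
        · exact Finset.mem_filter.mpr ⟨hxall y (hsub hyS') hy2, hy2⟩
      · push_neg at hxall
        obtain ⟨x, hxS, hxr, hxnot''⟩ := hxall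
        have hx : μ x = some j := mem_assigned.mp hxS
        have hxne'' : μ'' x ≠ some j := fun e => hxnot'' (mem_assigned.mpr e)
        have hwant := still_wants hM hIRs hunm hM'' hst'' hdom hx hxne''
        have haccx : M.cPref j (some x) none :=
          lt_of_le_of_ne (not_lt.mp (hIRc j x hx))
            (fun e => nomatch (M.cRank_inj j e))
        obtain ⟨hq'', hall''⟩ := blocked_shape hM'' (hst''.2 x j) hwant haccx hxne''
        have h1 : M.cnt j (M.assigned μ'' j) r = M.quota j := by
          have he : ((M.assigned μ'' j).filter fun y => M.cRank j (some y) < r) =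
              M.assigned μ'' j :=
            Finset.filter_true_of_mem (fun y hy => lt_trans (hall'' y hy) hxr)
          rw [Market.cnt, he, hq'']
        rw [h1]
        exact le_trans (cnt_le_card _ _) (hMν j)
    · -- i not at j under μ'': all of μ''(j) is better than i and j is full
      have hpref'' : M.sPref i (some j) (μ'' i) := by
        by_contra h
        have hlt : M.sRank i (μ'' i) < M.sRank i (some j) :=
          lt_of_le_of_ne (not_lt.mp h) (fun e => hi'' (M.sRank_inj i e))
        cases hc : μ'' i with
        | none =>
          rw [hc] at hlt
          exact absurd hij (lt_asymm hlt)
        | some c =>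
          rw [hc] at hlt
          have hpref : M.sPref i (some c) (μ i) := by
            rw [hiu]; exact lt_trans hlt hij
          have hnb : ¬ M.Blocks μ i c :=
            fun hb => absurd hlt (not_lt.mpr (hSMB.2 c hb))
          have haccc : M.cPref c (some i) none := by
            have h2 := hst''.1.2 c i hc
            exact lt_of_le_of_ne (not_lt.mp h2)
              (fun e => nomatch (M.cRank_inj c e))
          have hxnot : μ i ≠ some c := by
            rw [hiu]; exact fun e => nomatch e
          obtain ⟨hq', hall⟩ := blocked_shape hM hnb hpref haccc hxnot
          exact count_clash hM'' hdom hq' hall hc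
      obtain ⟨hq'', hall''⟩ := blocked_shape hM'' (hst''.2 i j) hpref'' hacc hi''
      have h1 : M.cnt j (M.assigned μ'' j) r = M.quota j := by
        have he : ((M.assigned μ'' j).filter fun y => M.cRank j (some y) < r) =
            M.assigned μ'' j :=
          Finset.filter_true_of_mem (fun y hy => lt_trans (hall'' y hy) hri)
        rw [Market.cnt, he, hq'']
      rw [h1]
      exact le_trans (cnt_le_card _ _) (hMν j)
  · have h1 : M.cnt j (M.assigned (T μ) j) r = M.cnt j S' r := by
      rw [Market.cnt, hAj, Finset.filter_insert, if_neg hri, Market.cnt]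
    rw [h1]
    exact le_trans (cnt_mono_subset hsub r) (hdom j r)

lemma iter_good {M : Market n m} {T : (Fin n → Option (Fin m)) → Fin n → Option (Fin m)}
    (hT : M.IsTStep T)
    {μ' : Fin n → Option (Fin m)} (hμ' : M.IsMatching μ') (h1 : M.OneEnvyFree μ')
    {μ'' : Fin n → Option (Fin m)} (hM'' : M.IsMatching μ'') (hst'' : M.Stable μ'')
    (hdom0 : ∀ c r, M.cnt c (M.assigned μ' c) r ≤ M.cnt c (M.assigned μ'' c) r) :
    ∀ k, M.IsMatching (T^[k] μ') ∧ M.OneEnvyFree (T^[k] μ') ∧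
      ∀ c r, M.cnt c (M.assigned (T^[k] μ') c) r ≤ M.cnt c (M.assigned μ'' c) r := by
  intro k
  induction k with
  | zero =>
    simp only [Function.iterate_zero_apply]
    exact ⟨hμ', h1, hdom0⟩
  | succ k ih =>
    obtain ⟨ha, hb, hc⟩ := ih
    rw [Function.iterate_succ_apply']
    by_cases hex : ∃ i j, M.Blocks (T^[k] μ') i j
    · obtain ⟨a, b, hb0⟩ := hex
      obtain ⟨k1, k2, k3⟩ := key hT ha hb hb0
      exact ⟨k1, k2, k3 μ'' hM'' hst'' hc⟩
    · have hfix : T (T^[k] μ') = T^[k] μ' :=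
        (hT _ ha hb).1 (fun a b hbb => hex ⟨a, b, hbb⟩)
      rw [hfix]
      exact ⟨ha, hb, hc⟩

end Market

end KeyLemma

/-- `T*(μ')` is the college-worst stable matching weakly preferred
by all colleges to the 1-envy-free matching `μ'`: no other stable matching
`μ''` satisfies `T*(μ') ≿ μ'' ≿ μ'`. -/
theorem Tstar_college_worst_above {n m : ℕ} (M : Market n m)
    (T Tstar : (Fin n → Option (Fin m)) → Fin n → Option (Fin m))
    (hT : M.IsTStep T) (hTs : M.IsTStarOf T Tstar)
    (μ' : Fin n → Option (Fin m))
    (hμ' : M.IsMatching μ') (h1 : M.OneEnvyFree μ')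
    (hstable : M.Stable (Tstar μ')) :
    ∀ μ'' : Fin n → Option (Fin m), M.IsMatching μ'' → M.Stable μ'' →
      μ'' ≠ Tstar μ' →
      ¬ (M.CollegesWeakPref (Tstar μ') μ'' ∧ M.CollegesWeakPref μ'' μ') := by
  intro μ'' hM'' hst'' hne hcon
  obtain ⟨hwp1, hwp2⟩ := hcon
  have hdom0 : ∀ c r, M.cnt c (M.assigned μ' c) r ≤ M.cnt c (M.assigned μ'' c) r :=
    fun c r => Market.weakPref_cnt hwp2 c r
  obtain ⟨r, hr, -⟩ := hTs μ' hμ' h1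
  have H := (Market.iter_good hT hμ' h1 hM'' hst'' hdom0 r).2.2
  rw [← hr] at H
  have H2 : ∀ c r', M.cnt c (M.assigned μ'' c) r' ≤ M.cnt c (M.assigned (Tstar μ') c) r' :=
    fun c r' => Market.weakPref_cnt hwp1 c r'
  have heqA : ∀ c, M.assigned μ'' c = M.assigned (Tstar μ') c := fun c =>
    Market.eq_of_cnt_eq (fun r' => le_antisymm (H2 c r') (H c r'))
  apply hne
  funext x
  cases h2 : Tstar μ' x with
  | some c =>
    have hx : x ∈ M.assigned μ'' c := by
      rw [heqA c]
      exact Market.mem_assigned.mpr h2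
    exact Market.mem_assigned.mp hx
  | none =>
    cases h3 : μ'' x with
    | none => rfl
    | some c =>
      have hx : x ∈ M.assigned (Tstar μ') c := by
        rw [← heqA c]
        exact Market.mem_assigned.mpr h3
      rw [Market.mem_assigned.mp hx] at h2
      cases h2
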